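/- Let j, h ∈ ℝ and let u, w, ψ : ℝ → ℝ be functions with u(t) ∈ (−1, 1) for all t, u' = w, w' = 3u² − 2hu − 1, ψ' = j/(1 − u²), and (1/2)(w² + j²)/(1 − u²) + u = h for all t. Define x(t) = √(1 − u(t)²)·cos(ψ(t)) and y(t) = √(1 − u(t)²)·sin(ψ(t)). Then for all t, ẋ(t)·ÿ(t) − ẏ(t)·ẍ(t) = j·(2h − 3u(t)); hence the local curvature of the projected path is κ = j(2h − 3u)/v³ where v = √(2h − 2u − w²). -/

import Mathlib

open Real

theorem spherical_pendulum_projected_curvature_numerator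
    (j h : ℝ) (u w ψ : ℝ → ℝ)
    (hrange : ∀ t : ℝ, u t ∈ Set.Ioo (-1 : ℝ) 1)
    (hu : ∀ t : ℝ, HasDerivAt u (w t) t)
    (hw : ∀ t : ℝ, HasDerivAt w (3 * (u t) ^ 2 - 2 * h * u t - 1) t)
    (hψ : ∀ t : ℝ, HasDerivAt ψ (j / (1 - (u t) ^ 2)) t)
    (henergy : ∀ t : ℝ,
      (1 / 2) * ((w t) ^ 2 + j ^ 2) / (1 - (u t) ^ 2) + u t = h)
    (x y : ℝ → ℝ)
    (hx : ∀ t : ℝ, x t = Real.sqrt (1 - (u t) ^ 2) * Real.cos (ψ t))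
    (hy : ∀ t : ℝ, y t = Real.sqrt (1 - (u t) ^ 2) * Real.sin (ψ t)) :
    ∀ t : ℝ,
      deriv x t * deriv (deriv y) t - deriv y t * deriv (deriv x) t
        = j * (2 * h - 3 * u t) := by
  have hP : ∀ s : ℝ, 0 < 1 - u s ^ 2 := fun s => by
    have h1 := (hrange s).1; have h2 := (hrange s).2; nlinarith
  have hRpos : ∀ s : ℝ, 0 < Real.sqrt (1 - u s ^ 2) := fun s =>
    Real.sqrt_pos.mpr (hP s)
  have hR2 : ∀ s : ℝ, Real.sqrt (1 - u s ^ 2) ^ 2 = 1 - u s ^ 2 := fun s =>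
    Real.sq_sqrt (hP s).le
  have dR : ∀ s : ℝ, HasDerivAt (fun τ => Real.sqrt (1 - u τ ^ 2))
      (-(u s * w s) / Real.sqrt (1 - u s ^ 2)) s := by
    intro s
    have h1 : HasDerivAt (fun τ => 1 - u τ ^ 2) (-(2 * u s * w s)) s := by
      have := ((hu s).pow 2).const_sub 1
      simpa [mul_comm, mul_assoc, mul_left_comm] using this
    have h2 := h1.sqrt (hP s).ne'
    convert h2 using 1
    have := (hRpos s).ne'
    field_simp
  -- first derivatives
  set Fx : ℝ → ℝ := fun s =>
    (-(u s * w s) * Real.cos (ψ s) - j * Real.sin (ψ s)) / Real.sqrt (1 - u s ^ 2) with hFx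
  set Fy : ℝ → ℝ := fun s =>
    (-(u s * w s) * Real.sin (ψ s) + j * Real.cos (ψ s)) / Real.sqrt (1 - u s ^ 2) with hFy
  have hxe : x = fun τ => Real.sqrt (1 - u τ ^ 2) * Real.cos (ψ τ) := funext hx
  have hye : y = fun τ => Real.sqrt (1 - u τ ^ 2) * Real.sin (ψ τ) := funext hy
  have dcos : ∀ s : ℝ, HasDerivAt (fun τ => Real.cos (ψ τ))
      (-Real.sin (ψ s) * (j / (1 - u s ^ 2))) s := fun s => (hψ s).cos
  have dsin : ∀ s : ℝ, HasDerivAt (fun τ => Real.sin (ψ τ))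
      (Real.cos (ψ s) * (j / (1 - u s ^ 2))) s := fun s => (hψ s).sin
  have dx : ∀ s : ℝ, HasDerivAt x (Fx s) s := by
    intro s
    rw [hxe]
    have : HasDerivAt (fun τ => Real.sqrt (1 - u τ ^ 2) * Real.cos (ψ τ)) _ s := (dR s).mul (dcos s)
    convert this using 1
    rw [hFx]
    simp only
    rw [← hR2 s]
    have hne := (hRpos s).ne'
    field_simp
    rw [Real.sqrt_sq (hRpos s).le]
    ring
  have dy : ∀ s : ℝ, HasDerivAt y (Fy s) s := by
    intro s
    rw [hye]
    have : HasDerivAt (fun τ => Real.sqrt (1 - u τ ^ 2) * Real.sin (ψ τ)) _ s := (dR s).mul (dsin s)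
    convert this using 1
    rw [hFy]
    simp only
    rw [← hR2 s]
    have hne := (hRpos s).ne'
    field_simp
    rw [Real.sqrt_sq (hRpos s).le]
    ring
  have hdx : deriv x = Fx := funext fun s => (dx s).deriv
  have hdy : deriv y = Fy := funext fun s => (dy s).deriv
  -- second derivatives
  have dNx : ∀ s : ℝ, HasDerivAt (fun τ => -(u τ * w τ) * Real.cos (ψ τ) - j * Real.sin (ψ τ))
      ((-(w s * w s + u s * (3 * u s ^ 2 - 2 * h * u s - 1)) * Real.cos (ψ s)
        + -(u s * w s) * (-Real.sin (ψ s) * (j / (1 - u s ^ 2))))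
        - j * (Real.cos (ψ s) * (j / (1 - u s ^ 2)))) s := by
    intro s
    exact (((hu s).mul (hw s)).neg.mul (dcos s)).sub ((dsin s).const_mul j)
  have dNy : ∀ s : ℝ, HasDerivAt (fun τ => -(u τ * w τ) * Real.sin (ψ τ) + j * Real.cos (ψ τ))
      ((-(w s * w s + u s * (3 * u s ^ 2 - 2 * h * u s - 1)) * Real.sin (ψ s)
        + -(u s * w s) * (Real.cos (ψ s) * (j / (1 - u s ^ 2))))
        + j * (-Real.sin (ψ s) * (j / (1 - u s ^ 2)))) s := by
    intro s
    exact (((hu s).mul (hw s)).neg.mul (dsin s)).add ((dcos s).const_mul j)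
  have ddx : ∀ s : ℝ, HasDerivAt Fx
      (((((-(w s * w s + u s * (3 * u s ^ 2 - 2 * h * u s - 1)) * Real.cos (ψ s)
        + -(u s * w s) * (-Real.sin (ψ s) * (j / (1 - u s ^ 2))))
        - j * (Real.cos (ψ s) * (j / (1 - u s ^ 2)))) * Real.sqrt (1 - u s ^ 2)
        - (-(u s * w s) * Real.cos (ψ s) - j * Real.sin (ψ s)) * (-(u s * w s) / Real.sqrt (1 - u s ^ 2)))
        / Real.sqrt (1 - u s ^ 2) ^ 2)) s := by
    intro s
    exact (dNx s).div (dR s) (hRpos s).ne'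
  have ddy : ∀ s : ℝ, HasDerivAt Fy
      (((((-(w s * w s + u s * (3 * u s ^ 2 - 2 * h * u s - 1)) * Real.sin (ψ s)
        + -(u s * w s) * (Real.cos (ψ s) * (j / (1 - u s ^ 2))))
        + j * (-Real.sin (ψ s) * (j / (1 - u s ^ 2)))) * Real.sqrt (1 - u s ^ 2)
        - (-(u s * w s) * Real.sin (ψ s) + j * Real.cos (ψ s)) * (-(u s * w s) / Real.sqrt (1 - u s ^ 2)))
        / Real.sqrt (1 - u s ^ 2) ^ 2)) s := by
    intro s
    exact (dNy s).div (dR s) (hRpos s).ne'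
  intro t
  rw [hdx, hdy, (ddx t).deriv, (ddy t).deriv, hFx, hFy]
  simp only
  have hE : w t ^ 2 + j ^ 2 = 2 * (h - u t) * (1 - u t ^ 2) := by
    have h0 := henergy t
    have hne := (hP t).ne'
    field_simp at h0
    linarith
  have hsc : Real.sin (ψ t) ^ 2 + Real.cos (ψ t) ^ 2 = 1 := Real.sin_sq_add_cos_sq _
  have hRne := (hRpos t).ne'
  have hPne : 1 - u t ^ 2 ≠ 0 := (hP t).ne'
  field_simp
  linear_combination ((-2)*j*h + (-2)*j*h*Real.sqrt (1 - u t ^ 2)^2 + j^3*Real.cos (ψ t)^2 + j^3*Real.sin (ψ t)^2 + w t^2*j*Real.cos (ψ t)^2 + w t^2*j*Real.sin (ψ t)^2 + (3)*u t*j + (3)*u t*j*Real.sqrt (1 - u t ^ 2)^2 + (-1)*u t*j*Real.cos (ψ t)^2 + (-1)*u t*j*Real.sin (ψ t)^2 + (4)*u t^2*j*h + (2)*u t^2*j*h*Real.sqrt (1 - u t ^ 2)^2 + (-2)*u t^2*j*h*Real.cos (ψ t)^2 + (-2)*u t^2*j*h*Real.sin (ψ t)^2 + (-6)*u t^3*j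 + (-3)*u t^3*j*Real.sqrt (1 - u t ^ 2)^2 + (4)*u t^3*j*Real.cos (ψ t)^2 + (4)*u t^3*j*Real.sin (ψ t)^2 + (-2)*u t^4*j*h + (2)*u t^4*j*h*Real.cos (ψ t)^2 + (2)*u t^4*j*h*Real.sin (ψ t)^2 + (3)*u t^5*j + (-3)*u t^5*j*Real.cos (ψ t)^2 + (-3)*u t^5*j*Real.sin (ψ t)^2) * hR2 t + (j*Real.cos (ψ t)^2 + j*Real.sin (ψ t)^2 + (-1)*u t^2*j*Real.cos (ψ t)^2 + (-1)*u t^2*j*Real.sin (ψ t)^2) * hE + ((2)*j*h + (-3)*u t*j + (-6)*u t^2*j*h + (9)*u t^3*j + (6)*u t^4*j*h + (-9)*u t^5*j + (-2)*u t^6*j*h + (3)*u t^7*j) * hsc
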